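/- Let ε have E[ε²] < ∞ and τ ∈ (0,1) with E[g_τ(ε)] = 0. Define h_τ(x) = 2τ 1_{x≥0} + 2(1−τ) 1_{x<0}. If additionally P(ε = 0) = 0 and the distribution function of ε is continuous at 0, then E[ρ_τ(ε − t)] − E[ρ_τ(ε)] = (1/2) E[h_τ(ε)] t² + o(t²) as t → 0. -/

import Mathlib

open MeasureTheory Asymptotics Filter

noncomputable def rho (τ x : ℝ) : ℝ := |τ - (if x < 0 then 1 else 0)| * x ^ 2

noncomputable def g (τ x : ℝ) : ℝ := if 0 ≤ x then 2 * τ * x else 2 * (1 - τ) * x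

noncomputable def h (τ x : ℝ) : ℝ := if 0 ≤ x then 2 * τ else 2 * (1 - τ)

lemma measurable_rho (τ : ℝ) : Measurable (rho τ) := by
  unfold rho
  have : Measurable fun x : ℝ => (if x < 0 then (1:ℝ) else 0) :=
    Measurable.ite measurableSet_Iio measurable_const measurable_const
  exact ((measurable_const.sub this).abs).mul (measurable_id.pow_const 2)

lemma abs_rho_le {τ : ℝ} (hτ : τ ∈ Set.Ioo (0:ℝ) 1) (x : ℝ) : |rho τ x| ≤ x ^ 2 := by
  obtain ⟨h0, h1⟩ := hτ
  unfold rho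
  rw [abs_mul, abs_abs, abs_pow, sq_abs]
  have : |τ - (if x < 0 then (1:ℝ) else 0)| ≤ 1 := by
    split_ifs with hx
    · rw [abs_of_nonpos (by linarith)]; linarith
    · rw [sub_zero, abs_of_pos h0]; linarith
  nlinarith [sq_nonneg x]

lemma ptwise {τ : ℝ} (hτ : τ ∈ Set.Ioo (0:ℝ) 1) (t x : ℝ) :
    |rho τ (x - t) - rho τ x + g τ x * t - 1 / 2 * h τ x * t ^ 2|
      ≤ (Set.Ico 0 t ∪ Set.Ico t 0).indicator (fun _ => t ^ 2) x := by
  obtain ⟨h0, h1⟩ := hτ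
  have hind : (0:ℝ) ≤ (Set.Ico 0 t ∪ Set.Ico t 0).indicator (fun _ => t ^ 2) x :=
    Set.indicator_nonneg (fun _ _ => sq_nonneg t) x
  unfold rho g h
  rcases lt_or_ge x 0 with hx | hx
  · rcases lt_or_ge (x - t) 0 with hxt | hxt
    · rw [if_pos hxt, if_pos hx, if_neg (not_le.mpr hx), if_neg (not_le.mpr hx),
        abs_of_neg (show τ - (1:ℝ) < 0 by linarith)]
      refine le_trans (le_of_eq ?_) hind
      rw [abs_eq_zero]; ring
    · -- x < 0, x - t ≥ 0 : t ≤ x < 0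
      rw [if_neg (not_lt.mpr hxt), if_pos hx, if_neg (not_le.mpr hx), if_neg (not_le.mpr hx),
        sub_zero, abs_of_pos h0, abs_of_neg (show τ - (1:ℝ) < 0 by linarith)]
      rw [Set.indicator_of_mem (Set.mem_union_right _ (Set.mem_Ico.mpr ⟨by linarith, hx⟩))]
      rw [abs_le]
      constructor
      · nlinarith [sq_nonneg (x - t), mul_nonneg (by linarith : (0:ℝ) ≤ -x)
          (by linarith : (0:ℝ) ≤ x - 2 * t)]
      · nlinarith [sq_nonneg (x - t), mul_nonneg (by linarith : (0:ℝ) ≤ -x)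
          (by linarith : (0:ℝ) ≤ x - 2 * t)]
  · rcases lt_or_ge (x - t) 0 with hxt | hxt
    · -- 0 ≤ x < t
      rw [if_pos hxt, if_neg (not_lt.mpr hx), if_pos hx, if_pos hx, sub_zero,
        abs_of_pos h0, abs_of_neg (show τ - (1:ℝ) < 0 by linarith)]
      rw [Set.indicator_of_mem (Set.mem_union_left _ (Set.mem_Ico.mpr ⟨hx, by linarith⟩))]
      rw [abs_le]
      constructor
      · nlinarith [sq_nonneg (x - t), mul_nonneg hx (by linarith : (0:ℝ) ≤ 2 * t - x)]
      · nlinarith [sq_nonneg (x - t), mul_nonneg hx (by linarith : (0:ℝ) ≤ 2 * t - x)]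
    · rw [if_neg (not_lt.mpr hxt), if_neg (not_lt.mpr hx), if_pos hx, if_pos hx, sub_zero,
        abs_of_pos h0]
      refine le_trans (le_of_eq ?_) hind
      rw [abs_eq_zero]; ring

theorem expected_loss_second_order {Ω : Type*} [MeasurableSpace Ω]
    (μ : Measure Ω) [IsProbabilityMeasure μ] (ε : Ω → ℝ) (hmeas : Measurable ε)
    (hint : Integrable (fun ω => (ε ω) ^ 2) μ)
    (τ : ℝ) (hτ : τ ∈ Set.Ioo (0 : ℝ) 1)
    (hexp : (∫ ω, g τ (ε ω) ∂μ) = 0)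
    (hzero : μ {ω | ε ω = 0} = 0)
    (hcont : ContinuousAt (fun t : ℝ => (μ {ω | ε ω ≤ t}).toReal) 0) :
    (fun t : ℝ => (∫ ω, rho τ (ε ω - t) ∂μ) - (∫ ω, rho τ (ε ω) ∂μ)
        - (1 / 2) * (∫ ω, h τ (ε ω) ∂μ) * t ^ 2)
      =o[nhds 0] fun t : ℝ => t ^ 2 := by
  obtain ⟨hτ0, hτ1⟩ := hτ
  -- integrability facts
  have hε1 : Integrable ε μ := by
    have hsum : Integrable (fun ω => 1 + ε ω ^ 2) μ := (integrable_const (1:ℝ)).add hint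
    refine hsum.mono' hmeas.aestronglyMeasurable (ae_of_all _ fun ω => ?_)
    simp only [Real.norm_eq_abs]
    nlinarith [sq_nonneg (|ε ω| - 1), sq_abs (ε ω)]
  have int_rho : ∀ t : ℝ, Integrable (fun ω => rho τ (ε ω - t)) μ := by
    intro t
    have hsq : Integrable (fun ω => (ε ω - t) ^ 2) μ := by
      have h2 : Integrable (fun ω => ε ω ^ 2 - (2 * t) * ε ω + t ^ 2) μ :=
        (hint.sub (hε1.const_mul _)).add (integrable_const _)
      have he : (fun ω => (ε ω - t) ^ 2) = fun ω => ε ω ^ 2 - (2 * t) * ε ω + t ^ 2 := by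
        funext ω; ring
      rw [he]; exact h2
    refine hsq.mono' ((measurable_rho τ).comp (hmeas.sub measurable_const)).aestronglyMeasurable
      (ae_of_all _ fun ω => ?_)
    simpa using abs_rho_le ⟨hτ0, hτ1⟩ (ε ω - t)
  have int_rho0 : Integrable (fun ω => rho τ (ε ω)) μ := by
    simpa using int_rho 0
  have int_g : Integrable (fun ω => g τ (ε ω)) μ := by
    refine (hε1.abs.const_mul 2).mono'
      ?_ (ae_of_all _ fun ω => ?_)
    · have : Measurable (g τ) := by
        unfold g
        exact Measurable.ite measurableSet_Ici
          (measurable_const.mul measurable_id) (measurable_const.mul measurable_id)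
      exact (this.comp hmeas).aestronglyMeasurable
    · simp only [Real.norm_eq_abs, g]
      split_ifs with hx
      · rw [abs_of_nonneg (by nlinarith)]; nlinarith [abs_of_nonneg hx]
      · push_neg at hx
        rw [abs_of_nonpos (by nlinarith)]; nlinarith [abs_of_neg hx]
  have int_h : Integrable (fun ω => h τ (ε ω)) μ := by
    refine (integrable_const (2:ℝ)).mono' ?_ (ae_of_all _ fun ω => ?_)
    · have : Measurable (h τ) := by
        unfold h
        exact Measurable.ite measurableSet_Ici measurable_const measurable_const
      exact (this.comp hmeas).aestronglyMeasurable
    · simp only [Real.norm_eq_abs, h]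
      split_ifs
      · rw [abs_of_nonneg (by linarith)]; linarith
      · rw [abs_of_nonneg (by linarith)]; linarith
  have int_D : ∀ t : ℝ, Integrable
      (fun ω => rho τ (ε ω - t) - rho τ (ε ω) + g τ (ε ω) * t - 1 / 2 * h τ (ε ω) * t ^ 2) μ := by
    intro t
    exact (((int_rho t).sub int_rho0).add (int_g.mul_const t)).sub
      ((int_h.const_mul (1/2)).mul_const (t ^ 2))
  -- key rewriting of the target function
  have key : ∀ t : ℝ,
      (∫ ω, rho τ (ε ω - t) ∂μ) - (∫ ω, rho τ (ε ω) ∂μ)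
        - (1 / 2) * (∫ ω, h τ (ε ω) ∂μ) * t ^ 2
      = ∫ ω, (rho τ (ε ω - t) - rho τ (ε ω) + g τ (ε ω) * t
          - 1 / 2 * h τ (ε ω) * t ^ 2) ∂μ := by
    intro t
    have iD1 : Integrable (fun ω => rho τ (ε ω - t) - rho τ (ε ω) + g τ (ε ω) * t) μ :=
      ((int_rho t).sub int_rho0).add (int_g.mul_const t)
    have iD2 : Integrable (fun ω => 1 / 2 * h τ (ε ω) * t ^ 2) μ :=
      (int_h.const_mul (1/2)).mul_const (t ^ 2)
    have iD3 : Integrable (fun ω => rho τ (ε ω - t) - rho τ (ε ω)) μ :=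
      (int_rho t).sub int_rho0
    have iD4 : Integrable (fun ω => g τ (ε ω) * t) μ := int_g.mul_const t
    rw [integral_sub iD1 iD2, integral_add iD3 iD4, integral_sub (int_rho t) int_rho0]
    have h1 : (∫ ω, g τ (ε ω) * t ∂μ) = (∫ ω, g τ (ε ω) ∂μ) * t := integral_mul_const t _
    have h2 : (∫ ω, 1 / 2 * h τ (ε ω) * t ^ 2 ∂μ)
        = (1 / 2) * (∫ ω, h τ (ε ω) ∂μ) * t ^ 2 := by
      rw [integral_mul_const (t ^ 2) (fun ω => 1 / 2 * h τ (ε ω)), integral_const_mul]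
    rw [h1, h2, hexp]
    ring
  -- the bound via the sign-change set
  set G : ℝ → ℝ := fun s => (μ {ω | ε ω ≤ s}).toReal with hG
  have meas_le : ∀ s : ℝ, MeasurableSet {ω | ε ω ≤ s} := fun s =>
    hmeas measurableSet_Iic
  have hb : ∀ t : ℝ, |∫ ω, (rho τ (ε ω - t) - rho τ (ε ω) + g τ (ε ω) * t
      - 1 / 2 * h τ (ε ω) * t ^ 2) ∂μ| ≤ t ^ 2 * (G |t| - G (-2 * |t|)) := by
    intro t
    set A : Set ℝ := Set.Ico 0 t ∪ Set.Ico t 0 with hA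
    have hAmeas : MeasurableSet A := (measurableSet_Ico).union measurableSet_Ico
    have hind_int : Integrable (fun ω => A.indicator (fun _ => t ^ 2) (ε ω)) μ := by
      have : (fun ω => A.indicator (fun _ : ℝ => t ^ 2) (ε ω))
          = (ε ⁻¹' A).indicator (fun _ => t ^ 2) := by
        funext ω
        by_cases hm : ε ω ∈ A
        · rw [Set.indicator_of_mem hm, Set.indicator_of_mem (Set.mem_preimage.mpr hm)]
        · rw [Set.indicator_of_notMem hm,
            Set.indicator_of_notMem (fun hc => hm (Set.mem_preimage.mp hc))]
      rw [this]
      exact (integrable_const _).indicator (hmeas hAmeas)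
    have step1 : |∫ ω, (rho τ (ε ω - t) - rho τ (ε ω) + g τ (ε ω) * t
        - 1 / 2 * h τ (ε ω) * t ^ 2) ∂μ| ≤ ∫ ω, A.indicator (fun _ => t ^ 2) (ε ω) ∂μ := by
      rw [← Real.norm_eq_abs]
      refine le_trans (norm_integral_le_integral_norm _) ?_
      refine integral_mono (int_D t).norm hind_int fun ω => ?_
      exact ptwise ⟨hτ0, hτ1⟩ t (ε ω)
    have step2 : (∫ ω, A.indicator (fun _ => t ^ 2) (ε ω) ∂μ)
        = t ^ 2 * (μ (ε ⁻¹' A)).toReal := by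
      have : (fun ω => A.indicator (fun _ : ℝ => t ^ 2) (ε ω))
          = (ε ⁻¹' A).indicator (fun _ => t ^ 2) := by
        funext ω
        by_cases hm : ε ω ∈ A
        · rw [Set.indicator_of_mem hm, Set.indicator_of_mem (Set.mem_preimage.mpr hm)]
        · rw [Set.indicator_of_notMem hm,
            Set.indicator_of_notMem (fun hc => hm (Set.mem_preimage.mp hc))]
      rw [this, integral_indicator_const _ (hmeas hAmeas)]
      simp [mul_comm, Measure.real]
    have step3 : (μ (ε ⁻¹' A)).toReal ≤ G |t| - G (-2 * |t|) := by
      rcases eq_or_ne t 0 with rfl | ht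
      · have : A = ∅ := by simp [hA]
        simp [this, hG]
      · have habs : (0:ℝ) < |t| := abs_pos.mpr ht
        have hsub : ε ⁻¹' A ⊆ {ω | ε ω ≤ |t|} \ {ω | ε ω ≤ -2 * |t|} := by
          intro ω hω
          rcases hω with h' | h'
          · obtain ⟨ha, hb'⟩ := h'
            exact ⟨le_trans hb'.le (le_abs_self t), by simp only [Set.mem_setOf_eq]; nlinarith⟩
          · obtain ⟨ha, hb'⟩ := h'
            refine ⟨le_trans hb'.le (abs_nonneg t), ?_⟩
            simp only [Set.mem_setOf_eq, not_le]
            have : -|t| ≤ t := neg_abs_le t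
            nlinarith
        have hmono := measure_mono (μ := μ) hsub
        have hdiff : μ ({ω | ε ω ≤ |t|} \ {ω | ε ω ≤ -2 * |t|})
            = μ {ω | ε ω ≤ |t|} - μ {ω | ε ω ≤ -2 * |t|} := by
          refine measure_diff ?_ (meas_le _).nullMeasurableSet (measure_ne_top μ _)
          intro ω hω
          simp only [Set.mem_setOf_eq] at hω ⊢
          nlinarith
        have hle : μ {ω | ε ω ≤ -2 * |t|} ≤ μ {ω | ε ω ≤ |t|} :=
          measure_mono fun ω hω => by
            simp only [Set.mem_setOf_eq] at hω ⊢; nlinarith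
        calc (μ (ε ⁻¹' A)).toReal
            ≤ (μ ({ω | ε ω ≤ |t|} \ {ω | ε ω ≤ -2 * |t|})).toReal :=
              ENNReal.toReal_mono (measure_ne_top μ _) hmono
          _ = G |t| - G (-2 * |t|) := by
              rw [hdiff, ENNReal.toReal_sub_of_le hle (measure_ne_top μ _)]
    calc |∫ ω, (rho τ (ε ω - t) - rho τ (ε ω) + g τ (ε ω) * t
        - 1 / 2 * h τ (ε ω) * t ^ 2) ∂μ|
        ≤ t ^ 2 * (μ (ε ⁻¹' A)).toReal := by rw [← step2]; exact step1
      _ ≤ t ^ 2 * (G |t| - G (-2 * |t|)) :=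
          mul_le_mul_of_nonneg_left step3 (sq_nonneg t)
  -- limit of the bound
  have hGlim : Tendsto (fun t : ℝ => G |t| - G (-2 * |t|)) (nhds 0) (nhds 0) := by
    have h1 : Tendsto (fun t : ℝ => |t|) (nhds 0) (nhds 0) := by
      simpa using continuous_abs.tendsto (0:ℝ)
    have h2 : Tendsto (fun t : ℝ => -2 * |t|) (nhds 0) (nhds 0) := by
      have := h1.const_mul (-2 : ℝ)
      simpa using this
    have hc : Tendsto G (nhds 0) (nhds (G 0)) := hcont
    have := (hc.comp h1).sub (hc.comp h2)
    simpa using this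
  -- conclude
  rw [isLittleO_iff]
  intro c hc
  have hev : ∀ᶠ t : ℝ in nhds 0, G |t| - G (-2 * |t|) < c :=
    hGlim.eventually (eventually_lt_nhds hc)
  filter_upwards [hev] with t ht
  rw [key t]
  calc ‖∫ ω, (rho τ (ε ω - t) - rho τ (ε ω) + g τ (ε ω) * t
      - 1 / 2 * h τ (ε ω) * t ^ 2) ∂μ‖
      ≤ t ^ 2 * (G |t| - G (-2 * |t|)) := by
        rw [Real.norm_eq_abs]; exact hb t
    _ ≤ t ^ 2 * c := mul_le_mul_of_nonneg_left ht.le (sq_nonneg t)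
    _ ≤ c * ‖t ^ 2‖ := by
        rw [Real.norm_eq_abs, abs_of_nonneg (sq_nonneg t)]; linarith
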